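/- arXiv:2109.14142 — 3 statements merged into one kernel-verified Lean document; each statement's English description precedes it below -/
import Mathlib

section
/- Let x_1, …, x_n ∈ ℝ^d, let p ∈ ℕ, and let K_p ∈ ℝ^{n×n} be the matrix with (K_p)_{ij} = (x_iᵀx_j)^p. Suppose M ∈ ℝ^{n×n} is a symmetric positive definite matrix and α > 0 is such that M ⪰ α²·K_p. Then for any β ∈ ℝ^d, letting y = ((βᵀx_1)^p, …, (βᵀx_n)^p) ∈ ℝ^n, one has √(yᵀ M^{−1} y) ≤ ‖β‖₂^p / α. -/
open Matrix
open scoped BigOperators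

noncomputable section

/-- Euclidean norm of a vector in `ℝ^d`. -/
def vnorm {d : ℕ} (v : Fin d → ℝ) : ℝ := Real.sqrt (∑ j, v j ^ 2)

/-- Feature-map identity: `(∑ k, v k * w k)^p` expands as a sum over `p`-tuples. -/
lemma feat_sum {d p : ℕ} (v w : Fin d → ℝ) :
    (∑ k, v k * w k) ^ p
      = ∑ f : Fin p → Fin d, (∏ i, v (f i)) * (∏ i, w (f i)) := by
  rw [Fintype.sum_pow]
  exact Finset.sum_congr rfl fun f _ => Finset.prod_mul_distrib

/-- If a symmetric positive definite matrix `M` dominates `α² K_p`, where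
`(K_p)_{ij} = (x_iᵀx_j)^p`, then for `y = ((βᵀx_1)^p, …, (βᵀx_n)^p)` one has
`√(yᵀ M⁻¹ y) ≤ ‖β‖₂^p / α`. -/
theorem kernel_domination_complexity (n d p : ℕ) (x : Fin n → Fin d → ℝ)
    (M : Matrix (Fin n) (Fin n) ℝ) (α : ℝ) (hα : 0 < α) (hM : M.PosDef)
    (hdom : (M - α ^ 2 • Matrix.of fun i j => (∑ k, x i k * x j k) ^ p).PosSemidef)
    (β : Fin d → ℝ) :
    Real.sqrt ((fun i => (∑ k, β k * x i k) ^ p) ⬝ᵥ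
        M⁻¹.mulVec fun i => (∑ k, β k * x i k) ^ p) ≤ vnorm β ^ p / α := by
  set y : Fin n → ℝ := fun i => (∑ k, β k * x i k) ^ p with hy
  set z : Fin n → ℝ := M⁻¹.mulVec y with hz
  set S : ℝ := ∑ j, β j ^ 2 with hS
  set t : ℝ := y ⬝ᵥ z with ht
  have hS0 : 0 ≤ S := Finset.sum_nonneg fun _ _ => sq_nonneg _
  have ht0 : 0 ≤ t := by
    have := hM.inv.posSemidef.dotProduct_mulVec_nonneg y
    simpa [ht, hz] using this
  -- M *ᵥ z = y
  have hMz : M *ᵥ z = y := by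
    rw [hz, Matrix.mulVec_mulVec, Matrix.mul_nonsing_inv M
      (isUnit_iff_ne_zero.mpr hM.det_pos.ne'), Matrix.one_mulVec]
  set Q : ℝ := z ⬝ᵥ (Matrix.of fun i j => (∑ k, x i k * x j k) ^ p) *ᵥ z with hQ
  -- domination: α² Q ≤ t
  have hQt : α ^ 2 * Q ≤ t := by
    have h0 := hdom.dotProduct_mulVec_nonneg z
    simp only [star_trivial, Matrix.sub_mulVec, Matrix.smul_mulVec,
      dotProduct_sub, dotProduct_smul, smul_eq_mul] at h0
    have hzy : z ⬝ᵥ M *ᵥ z = t := by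
      rw [hMz, ht, dotProduct_comm]
    linarith
  -- Cauchy–Schwarz in feature space
  have h1 : ∑ f : Fin p → Fin d,
      (∏ i, β (f i)) * (∑ i', z i' * ∏ i, x i' (f i)) = t := by
    have : ∀ f : Fin p → Fin d,
        (∏ i, β (f i)) * (∑ i', z i' * ∏ i, x i' (f i))
          = ∑ i', z i' * ((∏ i, β (f i)) * ∏ i, x i' (f i)) := by
      intro f; rw [Finset.mul_sum]; exact Finset.sum_congr rfl fun _ _ => by ring
    simp_rw [this]
    rw [Finset.sum_comm]
    simp_rw [← Finset.mul_sum, ← feat_sum]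
    rw [ht, dotProduct]
    exact Finset.sum_congr rfl fun i _ => by rw [hy]; ring
  have h2 : ∑ f : Fin p → Fin d, (∏ i, β (f i)) ^ 2 = S ^ p := by
    have : ∀ f : Fin p → Fin d, (∏ i, β (f i)) ^ 2
        = (∏ i, β (f i)) * ∏ i, β (f i) := fun f => sq _
    simp_rw [this]
    rw [← feat_sum]
    congr 1
    exact Finset.sum_congr rfl fun k _ => (sq (β k)).symm
  have h3 : ∑ f : Fin p → Fin d, (∑ i', z i' * ∏ i, x i' (f i)) ^ 2 = Q := by
    have expand : ∀ f : Fin p → Fin d, (∑ i', z i' * ∏ i, x i' (f i)) ^ 2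
        = ∑ i', ∑ j', z i' * (((∏ i, x i' (f i)) * ∏ i, x j' (f i)) * z j') := by
      intro f
      rw [sq, Finset.sum_mul_sum]
      exact Finset.sum_congr rfl fun i _ =>
        Finset.sum_congr rfl fun j _ => by ring
    simp_rw [expand]
    rw [Finset.sum_comm]
    have : ∀ i', ∑ f : Fin p → Fin d, ∑ j',
        z i' * (((∏ i, x i' (f i)) * ∏ i, x j' (f i)) * z j')
          = ∑ j', z i' * ((∑ k, x i' k * x j' k) ^ p * z j') := by
      intro i'
      rw [Finset.sum_comm]
      refine Finset.sum_congr rfl fun j' _ => ?_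
      rw [feat_sum, Finset.sum_mul, Finset.mul_sum]
    simp_rw [this]
    rw [hQ, dotProduct]
    refine Finset.sum_congr rfl fun i _ => ?_
    rw [Matrix.mulVec, dotProduct, Finset.mul_sum]
    rfl
  have hcs := Finset.sum_mul_sq_le_sq_mul_sq Finset.univ
    (fun f : Fin p → Fin d => ∏ i, β (f i))
    (fun f : Fin p → Fin d => ∑ i', z i' * ∏ i, x i' (f i))
  rw [h1, h2, h3] at hcs
  -- conclude t ≤ S^p / α²
  have hfin : t ≤ S ^ p / α ^ 2 := by
    rw [le_div_iff₀ (by positivity)]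
    rcases eq_or_lt_of_le ht0 with h | h
    · rw [← h]
      simpa using pow_nonneg hS0 p
    · have hkey := mul_le_mul_of_nonneg_left hQt (pow_nonneg hS0 p)
      nlinarith [hcs, h, sq_nonneg α]
  have hsqrt : Real.sqrt t ≤ Real.sqrt (S ^ p / α ^ 2) := Real.sqrt_le_sqrt hfin
  have hsp : Real.sqrt (S ^ p) = Real.sqrt S ^ p := by
    rw [show S ^ p = (Real.sqrt S ^ p) ^ 2 by
      rw [← pow_mul, mul_comm, pow_mul, Real.sq_sqrt hS0],
      Real.sqrt_sq (pow_nonneg (Real.sqrt_nonneg S) p)]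
  have heq : Real.sqrt (S ^ p / α ^ 2) = vnorm β ^ p / α := by
    rw [Real.sqrt_div (pow_nonneg hS0 p), hsp, Real.sqrt_sq hα.le]
    rfl
  calc Real.sqrt (y ⬝ᵥ M⁻¹.mulVec y) = Real.sqrt t := rfl
    _ ≤ _ := hsqrt
    _ = _ := heq

end
end

section
/- Let X_1, X_2 ∈ ℝ^d be unit vectors and z = X_1ᵀX_2. For w a standard Gaussian vector in ℝ^d (w ∼ N(0, I_d)): (1) E[√2·max(0, wᵀX_1) · √2·max(0, wᵀX_2)] = (√(1−z²) + (π − arccos z)·z)/π; and (2) E[√2·1{wᵀX_1 > 0} · √2·1{wᵀX_2 > 0}] = (π − arccos z)/π. -/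
open MeasureTheory ProbabilityTheory
open scoped Real BigOperators NNReal ENNReal
open Set

noncomputable section

/-- Euclidean dot product. -/
def vdot {d : ℕ} (u v : Fin d → ℝ) : ℝ := ∑ j, u j * v j

/-- The standard Gaussian measure `N(0, I_d)` on `ℝ^d`. -/
def stdGauss (d : ℕ) : Measure (Fin d → ℝ) :=
  Measure.pi fun _ => gaussianReal 0 1

lemma lintegral_pi_prod : ∀ {n : ℕ} (f : Fin n → ℝ → ℝ≥0∞), (∀ i, Measurable (f i)) →
    ∫⁻ x, ∏ i, f i (x i) ∂(Measure.pi fun _ : Fin n => (volume : Measure ℝ))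
      = ∏ i, ∫⁻ y, f i y := by
  intro n
  induction n with
  | zero => intro f _; simp
  | succ n ih =>
    intro f hf
    have hmp := (measurePreserving_piFinSuccAbove (fun _ : Fin (n+1) => (volume : Measure ℝ)) 0)
    set g : ℝ × (Fin n → ℝ) → ℝ≥0∞ := fun p => f 0 p.1 * ∏ i : Fin n, f i.succ (p.2 i) with hg
    have g_meas : Measurable g :=
      ((hf 0).comp measurable_fst).mul <|
        Finset.measurable_prod _ fun i _ =>
          (hf i.succ).comp ((measurable_pi_apply i).comp measurable_snd)
    calc ∫⁻ x, ∏ i, f i (x i) ∂(Measure.pi fun _ : Fin (n+1) => (volume : Measure ℝ))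
        = ∫⁻ x, g ((MeasurableEquiv.piFinSuccAbove (fun _ : Fin (n+1) => ℝ) 0) x)
            ∂(Measure.pi fun _ : Fin (n+1) => (volume : Measure ℝ)) := by
          refine lintegral_congr fun x => ?_
          rw [hg]
          simp only [MeasurableEquiv.piFinSuccAbove_apply, Fin.prod_univ_succ, Fin.zero_succAbove]
          rfl
      _ = ∫⁻ p, g p ∂((volume : Measure ℝ).prod (Measure.pi fun _ : Fin n => (volume : Measure ℝ))) :=
          hmp.lintegral_comp g_meas
      _ = (∫⁻ y, f 0 y) * ∏ i : Fin n, ∫⁻ y, f i.succ y := by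
          rw [hg, lintegral_prod_mul (hf 0).aemeasurable
            ((Finset.measurable_prod Finset.univ (fun i _ =>
              (hf i.succ).comp (measurable_pi_apply i))).aemeasurable : AEMeasurable
                (fun y : Fin n → ℝ => ∏ i : Fin n, f i.succ (y i)) _),
            ih (fun i => f i.succ) (fun i => hf i.succ)]
      _ = ∏ i, ∫⁻ y, f i y := (Fin.prod_univ_succ fun i => ∫⁻ y, f i y).symm

lemma stdGauss_eq (d : ℕ) :
    stdGauss d = (volume : Measure (Fin d → ℝ)).withDensity
      (fun x => ∏ j, gaussianPDF 0 1 (x j)) := by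
  rw [volume_pi]
  refine Measure.pi_eq fun s hs => ?_
  rw [withDensity_apply _ (MeasurableSet.univ_pi hs)]
  have hind : ∀ x : Fin d → ℝ, (Set.pi univ s).indicator (fun x => ∏ j, gaussianPDF 0 1 (x j)) x
      = ∏ j, (s j).indicator (gaussianPDF 0 1) (x j) := by
    intro x
    by_cases hx : x ∈ Set.pi univ s
    · rw [indicator_of_mem hx]
      exact Finset.prod_congr rfl fun j _ => (indicator_of_mem (hx j (Set.mem_univ j)) _).symm
    · rw [indicator_of_notMem hx]
      rw [mem_univ_pi] at hx
      push_neg at hx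
      obtain ⟨j, hj⟩ := hx
      exact (Finset.prod_eq_zero (Finset.mem_univ j)
        (by rw [indicator_of_notMem hj])).symm
  rw [← lintegral_indicator (MeasurableSet.univ_pi hs)]
  simp_rw [hind]
  rw [lintegral_pi_prod _ (fun i => (measurable_gaussianPDF 0 1).indicator (hs i))]
  refine Finset.prod_congr rfl fun j _ => ?_
  rw [lintegral_indicator (hs j), gaussianReal_of_var_ne_zero 0 one_ne_zero,
    withDensity_apply _ (hs j)]

lemma prod_gaussianPDF {d : ℕ} (x : Fin d → ℝ) :
    ∏ j, gaussianPDF 0 1 (x j)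
      = ENNReal.ofReal ((Real.sqrt (2*π))⁻¹ ^ d * Real.exp (-(∑ j, x j ^ 2)/2)) := by
  have hpdf : ∀ y : ℝ, gaussianPDFReal 0 1 y = (Real.sqrt (2*π))⁻¹ * Real.exp (-(y ^ 2)/2) := by
    intro y
    simp [gaussianPDFReal_def]
  simp_rw [gaussianPDF]
  rw [← ENNReal.ofReal_prod_of_nonneg (fun i _ => gaussianPDFReal_nonneg 0 1 (x i))]
  congr 1
  simp_rw [hpdf]
  rw [Finset.prod_mul_distrib, Finset.prod_const, Finset.card_univ, Fintype.card_fin,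
    ← Real.exp_sum]
  congr 1
  rw [← Finset.sum_div, ← Finset.sum_neg_distrib]

lemma measurePreserving_stdGauss_of {d : ℕ} {T : (Fin d → ℝ) → (Fin d → ℝ)}
    (hT : MeasurePreserving T (volume : Measure (Fin d → ℝ)) volume)
    (hnorm : ∀ w, ∑ j, T w j ^ 2 = ∑ j, w j ^ 2) :
    MeasurePreserving T (stdGauss d) (stdGauss d) := by
  have Fmeas : Measurable (fun x : Fin d → ℝ => ∏ j, gaussianPDF 0 1 (x j)) :=
    Finset.measurable_prod _ fun j _ => (measurable_gaussianPDF 0 1).comp (measurable_pi_apply j)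
  refine ⟨hT.measurable, ?_⟩
  ext s hs
  rw [Measure.map_apply hT.measurable hs, stdGauss_eq, withDensity_apply _ hs,
    withDensity_apply _ (hT.measurable hs), ← lintegral_indicator hs,
    ← lintegral_indicator (hT.measurable hs)]
  have hcong : ∀ x, (T ⁻¹' s).indicator (fun x => ∏ j, gaussianPDF 0 1 (x j)) x
      = s.indicator (fun x => ∏ j, gaussianPDF 0 1 (x j)) (T x) := by
    intro x
    have hFx : (∏ j, gaussianPDF 0 1 (T x j)) = ∏ j, gaussianPDF 0 1 (x j) := by
      rw [prod_gaussianPDF, prod_gaussianPDF, hnorm]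
    by_cases hx : T x ∈ s
    · rw [indicator_of_mem hx, indicator_of_mem (mem_preimage.2 hx), hFx]
    · rw [indicator_of_notMem hx, indicator_of_notMem (fun h => hx (mem_preimage.1 h))]
  rw [lintegral_congr hcong]
  exact hT.lintegral_comp (Fmeas.indicator hs)

lemma sum_sq_eq_norm_sq {d : ℕ} (y : EuclideanSpace ℝ (Fin d)) :
    ∑ j, y j ^ 2 = ‖y‖ ^ 2 := by
  rw [EuclideanSpace.norm_eq, Real.sq_sqrt (Finset.sum_nonneg fun j _ => sq_nonneg _)]
  refine Finset.sum_congr rfl fun j _ => ?_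
  rw [Real.norm_eq_abs, sq_abs]

def EuclideanSpace.measurableEquiv (ι : Type*) [Fintype ι] : EuclideanSpace ℝ ι ≃ᵐ (ι → ℝ) :=
  (MeasurableEquiv.toLp 2 (ι → ℝ)).symm

lemma measurePreserving_basis_repr {d : ℕ}
    (B : OrthonormalBasis (Fin d) ℝ (EuclideanSpace ℝ (Fin d))) :
    MeasurePreserving
      ((⇑(EuclideanSpace.measurableEquiv (Fin d))) ∘ ⇑B.repr ∘
        ⇑(EuclideanSpace.measurableEquiv (Fin d)).symm)
      (stdGauss d) (stdGauss d) := by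
  refine measurePreserving_stdGauss_of ?_ ?_
  · exact (EuclideanSpace.volume_preserving_symm_measurableEquiv_toLp (Fin d)).comp
      (B.measurePreserving_repr.comp
        (EuclideanSpace.volume_preserving_symm_measurableEquiv_toLp (Fin d)).symm)
  · intro w
    have h1 : ∑ j, ((⇑(EuclideanSpace.measurableEquiv (Fin d))) ∘ ⇑B.repr ∘
        ⇑(EuclideanSpace.measurableEquiv (Fin d)).symm) w j ^ 2
        = ‖B.repr ((EuclideanSpace.measurableEquiv (Fin d)).symm w)‖ ^ 2 :=
      sum_sq_eq_norm_sq _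
    rw [h1, B.repr.norm_map, ← sum_sq_eq_norm_sq]
    rfl

instance (d : ℕ) : IsProbabilityMeasure (stdGauss d) := by
  unfold stdGauss; infer_instance


lemma stdGauss_map_pair {d : ℕ} (i j : Fin d) (hij : i ≠ j) :
    (stdGauss d).map (fun y => (y i, y j))
      = (gaussianReal 0 1).prod (gaussianReal 0 1) := by
  refine (Measure.prod_eq fun s t hs ht => ?_).symm
  rw [Measure.map_apply (by fun_prop) (hs.prod ht)]
  have hset : (fun y : Fin d → ℝ => (y i, y j)) ⁻¹' (s ×ˢ t)
      = Set.pi univ (fun k => if k = i then s else if k = j then t else univ) := by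
    ext y
    simp only [mem_preimage, mem_prod, mem_univ_pi]
    constructor
    · rintro ⟨h1, h2⟩ k
      by_cases hk : k = i
      · subst hk; simpa using h1
      · by_cases hk' : k = j
        · subst hk'; simp [hk, h2]
        · simp [hk, hk']
    · intro h
      refine ⟨by simpa using h i, ?_⟩
      have := h j
      simpa [if_neg (Ne.symm hij)] using this
  rw [hset]
  unfold stdGauss
  rw [Measure.pi_pi]
  have : ∀ k : Fin d, (gaussianReal 0 1) (if k = i then s else if k = j then t else univ)
      = (if k = i then (gaussianReal 0 1) s else 1) * (if k = j then (gaussianReal 0 1) t else 1) := by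
    intro k
    by_cases hk : k = i
    · subst hk
      rw [if_pos rfl, if_pos rfl, if_neg hij, mul_one]
    · by_cases hk' : k = j
      · subst hk'
        rw [if_neg hk, if_pos rfl, if_neg hk, if_pos rfl, one_mul]
      · simp [hk, hk']
  simp_rw [this]
  rw [Finset.prod_mul_distrib, Finset.prod_ite_eq' Finset.univ i
    (fun _ => (gaussianReal 0 1) s), Finset.prod_ite_eq' Finset.univ j
    (fun _ => (gaussianReal 0 1) t)]
  simp

lemma stdGauss_map_single {d : ℕ} (i : Fin d) :
    (stdGauss d).map (fun y => y i) = gaussianReal 0 1 := by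
  ext s hs
  rw [Measure.map_apply (measurable_pi_apply i) hs]
  have hset : (fun y : Fin d → ℝ => y i) ⁻¹' s
      = Set.pi univ (fun k => if k = i then s else univ) := by
    ext y
    simp only [mem_preimage, mem_univ_pi]
    constructor
    · intro h k
      by_cases hk : k = i
      · subst hk; simpa using h
      · simp [hk]
    · intro h; simpa using h i
  rw [hset]
  unfold stdGauss
  rw [Measure.pi_pi]
  have : ∀ k : Fin d, (gaussianReal 0 1) (if k = i then s else univ)
      = (if k = i then (gaussianReal 0 1) s else 1) := by
    intro k; split_ifs <;> simp
  simp_rw [this]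
  rw [Finset.prod_ite_eq' Finset.univ i (fun _ => (gaussianReal 0 1) s)]
  simp

section law

variable {d : ℕ}

lemma measurableEquiv_symm_apply {d : ℕ} (w : Fin d → ℝ) (k : Fin d) :
    (EuclideanSpace.measurableEquiv (Fin d)).symm w k = w k := by
  rfl

/-- joint law of two orthonormal projections -/
lemma stdGauss_map_pair_ortho (a b : Fin d → ℝ) (ha : ∑ j, a j ^ 2 = 1)
    (hb : ∑ j, b j ^ 2 = 1) (hab : ∑ j, a j * b j = 0) :
    (stdGauss d).map (fun w => (∑ j, w j * a j, ∑ j, w j * b j))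
      = (gaussianReal 0 1).prod (gaussianReal 0 1) := by
  classical
  set a' : EuclideanSpace ℝ (Fin d) := (WithLp.equiv 2 (Fin d → ℝ)).symm a with ha'
  set b' : EuclideanSpace ℝ (Fin d) := (WithLp.equiv 2 (Fin d → ℝ)).symm b with hb'
  have ha'app : ∀ k, a' k = a k := fun k => rfl
  have hb'app : ∀ k, b' k = b k := fun k => rfl
  have hinner_aa : (inner ℝ a' a' : ℝ) = 1 := by
    rw [PiLp.inner_apply]
    simpa [ha'app, pow_two] using ha
  have hinner_bb : (inner ℝ b' b' : ℝ) = 1 := by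
    rw [PiLp.inner_apply]
    simpa [hb'app, pow_two] using hb
  have hinner_ab : (inner ℝ a' b' : ℝ) = 0 := by
    rw [PiLp.inner_apply]
    simpa [ha'app, hb'app, mul_comm] using hab
  have hinner_ba : (inner ℝ b' a' : ℝ) = 0 := by
    rw [real_inner_comm]; exact hinner_ab
  have hna : ‖a'‖ = 1 := by
    have h := hinner_aa; simp at h; exact h.resolve_right (fun h' => by linarith [norm_nonneg a'])
  have hnb : ‖b'‖ = 1 := by
    have h := hinner_bb; simp at h; exact h.resolve_right (fun h' => by linarith [norm_nonneg b'])
  have hon2 : Orthonormal ℝ (![a', b'] : Fin 2 → EuclideanSpace ℝ (Fin d)) := by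
    rw [orthonormal_iff_ite]
    intro i j
    fin_cases i <;> fin_cases j <;>
      simp [hinner_aa, hinner_bb, hinner_ab, hinner_ba, hna, hnb]
  have hd2 : 2 ≤ d := by
    have := hon2.linearIndependent.fintype_card_le_finrank
    rw [finrank_euclideanSpace_fin] at this
    simpa using this
  set i0 : Fin d := ⟨0, by omega⟩ with hi0
  set i1 : Fin d := ⟨1, by omega⟩ with hi1
  have h01 : i0 ≠ i1 := by
    intro h
    simpa [hi0, hi1] using congrArg Fin.val h
  set v : Fin d → EuclideanSpace ℝ (Fin d) := fun k => if k = i0 then a' else b' with hv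
  have hres : Orthonormal ℝ (({i0, i1} : Set (Fin d)).restrict v) := by
    rw [orthonormal_iff_ite]
    rintro ⟨i, hi⟩ ⟨j, hj⟩
    simp only [Set.restrict_apply, Subtype.mk.injEq, hv]
    rcases hi with hi | hi <;> rcases hj with hj | hj <;> subst hi <;> subst hj <;>
      simp [h01, Ne.symm h01, hinner_aa, hinner_bb, hinner_ab, hinner_ba, Set.restrict, hna, hnb]
  obtain ⟨B, hB⟩ := Orthonormal.exists_orthonormalBasis_extension_of_card_eq
    (by rw [finrank_euclideanSpace_fin]; simp) hres
  have hB0 : B i0 = a' := by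
    have := hB i0 (by simp)
    simpa [hv] using this
  have hB1 : B i1 = b' := by
    have := hB i1 (by simp)
    simpa [hv, Ne.symm h01] using this
  set T := ((⇑(EuclideanSpace.measurableEquiv (Fin d))) ∘ ⇑B.repr ∘
        ⇑(EuclideanSpace.measurableEquiv (Fin d)).symm) with hT
  have hmp := measurePreserving_basis_repr B
  have hcomp : (fun w : Fin d → ℝ => (∑ j, w j * a j, ∑ j, w j * b j))
      = (fun y : Fin d → ℝ => (y i0, y i1)) ∘ T := by
    funext w
    have hw : ∀ i : Fin d, T w i
        = inner ℝ (B i) ((EuclideanSpace.measurableEquiv (Fin d)).symm w) := by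
      intro i
      rw [hT]
      simp only [Function.comp_apply]
      rw [← OrthonormalBasis.repr_apply_apply]
      rfl
    have hw0 : T w i0 = ∑ j, w j * a j := by
      rw [hw i0, hB0, PiLp.inner_apply]
      refine Finset.sum_congr rfl fun k _ => ?_
      simp only [RCLike.inner_apply, conj_trivial, ha'app, measurableEquiv_symm_apply]
    have hw1 : T w i1 = ∑ j, w j * b j := by
      rw [hw i1, hB1, PiLp.inner_apply]
      refine Finset.sum_congr rfl fun k _ => ?_
      simp only [RCLike.inner_apply, conj_trivial, hb'app, measurableEquiv_symm_apply]
    simp [Function.comp_apply, hw0, hw1]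
  rw [hcomp, ← Measure.map_map (by fun_prop) hmp.measurable, hmp.map_eq,
    stdGauss_map_pair i0 i1 h01]

/-- law of a single unit projection -/
lemma stdGauss_map_single_unit (a : Fin d → ℝ) (ha : ∑ j, a j ^ 2 = 1) :
    (stdGauss d).map (fun w => ∑ j, w j * a j) = gaussianReal 0 1 := by
  classical
  set a' : EuclideanSpace ℝ (Fin d) := (WithLp.equiv 2 (Fin d → ℝ)).symm a with ha'
  have ha'app : ∀ k, a' k = a k := fun k => rfl
  have hinner_aa : (inner ℝ a' a' : ℝ) = 1 := by
    rw [PiLp.inner_apply]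
    simpa [ha'app, pow_two] using ha
  have hna : ‖a'‖ = 1 := by
    have h := hinner_aa; simp at h; exact h.resolve_right (fun h' => by linarith [norm_nonneg a'])
  have hd1 : 1 ≤ d := by
    by_contra h
    push_neg at h
    interval_cases d
    simp at ha
  set i0 : Fin d := ⟨0, by omega⟩ with hi0
  set v : Fin d → EuclideanSpace ℝ (Fin d) := fun _ => a' with hv
  have hres : Orthonormal ℝ (({i0} : Set (Fin d)).restrict v) := by
    rw [orthonormal_iff_ite]
    rintro ⟨i, hi⟩ ⟨j, hj⟩
    simp only [Set.mem_singleton_iff] at hi hj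
    subst hi; subst hj
    simp [hv, Set.restrict, hna]
  obtain ⟨B, hB⟩ := Orthonormal.exists_orthonormalBasis_extension_of_card_eq
    (by rw [finrank_euclideanSpace_fin]; simp) hres
  have hB0 : B i0 = a' := hB i0 rfl
  set T := ((⇑(EuclideanSpace.measurableEquiv (Fin d))) ∘ ⇑B.repr ∘
        ⇑(EuclideanSpace.measurableEquiv (Fin d)).symm) with hT
  have hmp := measurePreserving_basis_repr B
  have hcomp : (fun w : Fin d → ℝ => ∑ j, w j * a j)
      = (fun y : Fin d → ℝ => y i0) ∘ T := by
    funext w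
    have hw : T w i0
        = inner ℝ (B i0) ((EuclideanSpace.measurableEquiv (Fin d)).symm w) := by
      rw [hT]
      simp only [Function.comp_apply]
      rw [← OrthonormalBasis.repr_apply_apply]
      rfl
    simp only [Function.comp_apply]
    rw [hw, hB0, PiLp.inner_apply]
    refine (Finset.sum_congr rfl fun k _ => ?_).symm
    simp only [RCLike.inner_apply, conj_trivial, ha'app, measurableEquiv_symm_apply]
  rw [hcomp, ← Measure.map_map (measurable_pi_apply i0) hmp.measurable, hmp.map_eq,
    stdGauss_map_single i0]

end law

lemma stdGauss_map_proj {d : ℕ} (X1 X2 : Fin d → ℝ) (h1 : ∑ j, X1 j ^ 2 = 1)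
    (h2 : ∑ j, X2 j ^ 2 = 1) :
    (stdGauss d).map (fun w => (∑ j, w j * X1 j, ∑ j, w j * X2 j))
      = ((gaussianReal 0 1).prod (gaussianReal 0 1)).map
        (fun p => (p.1, (∑ j, X1 j * X2 j) * p.1
          + Real.sqrt (1 - (∑ j, X1 j * X2 j) ^ 2) * p.2)) := by
  set z : ℝ := ∑ j, X1 j * X2 j with hz
  set s : ℝ := Real.sqrt (1 - z ^ 2) with hsdef
  have hz2 : z ^ 2 ≤ 1 := by
    have := Finset.sum_mul_sq_le_sq_mul_sq Finset.univ X1 X2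
    rw [h1, h2] at this
    simpa using this
  have hnum : ∑ j, (X2 j - z * X1 j) ^ 2 = 1 - z ^ 2 := by
    have expand : ∀ j, (X2 j - z * X1 j) ^ 2
        = X2 j ^ 2 - (2 * z) * (X1 j * X2 j) + z ^ 2 * X1 j ^ 2 := fun j => by ring
    simp_rw [expand]
    rw [Finset.sum_add_distrib, Finset.sum_sub_distrib, ← Finset.mul_sum, ← Finset.mul_sum,
      h1, h2, ← hz]
    ring
  rcases eq_or_lt_of_le hz2 with heq | hlt
  · -- |z| = 1, X2 = z • X1
    have hs0 : s = 0 := by rw [hsdef, heq]; simp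
    have hX2 : ∀ j, X2 j = z * X1 j := by
      intro j
      have hsum : ∑ j, (X2 j - z * X1 j) ^ 2 = 0 := by rw [hnum, heq]; ring
      have := (Finset.sum_eq_zero_iff_of_nonneg (fun i _ => sq_nonneg _)).1 hsum j
        (Finset.mem_univ j)
      have := sq_eq_zero_iff.1 this
      linarith
    have hcompL : (fun w : Fin d → ℝ => (∑ j, w j * X1 j, ∑ j, w j * X2 j))
        = (fun u : ℝ => (u, z * u)) ∘ (fun w => ∑ j, w j * X1 j) := by
      funext w
      simp only [Function.comp_apply, Prod.mk.injEq]
      refine ⟨trivial, ?_⟩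
      rw [Finset.mul_sum]
      exact Finset.sum_congr rfl fun j _ => by rw [hX2 j]; ring
    have hcompR : (fun p : ℝ × ℝ => (p.1, z * p.1 + s * p.2))
        = (fun u : ℝ => (u, z * u)) ∘ Prod.fst := by
      funext p
      simp [hs0]
    rw [hcompL, ← Measure.map_map (by fun_prop) (by fun_prop),
      stdGauss_map_single_unit X1 h1, hcompR,
      ← Measure.map_map (by fun_prop) measurable_fst, Measure.map_fst_prod,
      measure_univ, one_smul]
  · -- |z| < 1
    have hs2 : s ^ 2 = 1 - z ^ 2 := Real.sq_sqrt (by linarith)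
    have hs : 0 < s := Real.sqrt_pos.2 (by linarith)
    set Y : Fin d → ℝ := fun j => (X2 j - z * X1 j) / s with hY
    have hY2 : ∑ j, Y j ^ 2 = 1 := by
      simp_rw [hY, div_pow]
      rw [← Finset.sum_div, hnum, ← hs2]
      field_simp
    have hXY : ∑ j, X1 j * Y j = 0 := by
      simp_rw [hY, ← mul_div_assoc]
      rw [← Finset.sum_div]
      have : ∑ j, X1 j * (X2 j - z * X1 j) = 0 := by
        have expand : ∀ j, X1 j * (X2 j - z * X1 j)
            = X1 j * X2 j - z * X1 j ^ 2 := fun j => by ring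
        simp_rw [expand]
        rw [Finset.sum_sub_distrib, ← Finset.mul_sum, h1, ← hz]
        ring
      rw [this, zero_div]
    have hcomp : (fun w : Fin d → ℝ => (∑ j, w j * X1 j, ∑ j, w j * X2 j))
        = (fun p : ℝ × ℝ => (p.1, z * p.1 + s * p.2))
          ∘ (fun w => (∑ j, w j * X1 j, ∑ j, w j * Y j)) := by
      funext w
      simp only [Function.comp_apply, Prod.mk.injEq]
      refine ⟨trivial, ?_⟩
      rw [Finset.mul_sum, Finset.mul_sum, ← Finset.sum_add_distrib]
      refine Finset.sum_congr rfl fun j _ => ?_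
      rw [hY]
      field_simp
      ring
    rw [hcomp, ← Measure.map_map (by fun_prop) (by fun_prop),
      stdGauss_map_pair_ortho X1 Y h1 hY2 hXY]

lemma gauss_prod_withDensity :
    (gaussianReal 0 1).prod (gaussianReal 0 1)
      = ((volume : Measure ℝ).prod (volume : Measure ℝ)).withDensity
          (fun q => gaussianPDF 0 1 q.1 * gaussianPDF 0 1 q.2) := by
  refine Measure.prod_eq fun s t hs ht => ?_
  rw [withDensity_apply _ (hs.prod ht), ← Measure.prod_restrict,
    lintegral_prod_mul ((measurable_gaussianPDF 0 1).aemeasurable)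
      ((measurable_gaussianPDF 0 1).aemeasurable)]
  rw [gaussianReal_of_var_ne_zero 0 one_ne_zero, withDensity_apply _ hs, withDensity_apply _ ht]

lemma integral_gauss_prod (h : ℝ × ℝ → ℝ) :
    ∫ q, h q ∂((gaussianReal 0 1).prod (gaussianReal 0 1))
      = ∫ q : ℝ × ℝ, (gaussianPDFReal 0 1 q.1 * gaussianPDFReal 0 1 q.2) * h q
        ∂((volume : Measure ℝ).prod (volume : Measure ℝ)) := by
  rw [gauss_prod_withDensity]
  have hd : (fun q : ℝ × ℝ => gaussianPDF 0 1 q.1 * gaussianPDF 0 1 q.2)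
      = fun q : ℝ × ℝ => ((Real.toNNReal (gaussianPDFReal 0 1 q.1)
          * Real.toNNReal (gaussianPDFReal 0 1 q.2) : ℝ≥0) : ℝ≥0∞) := by
    funext q
    rw [ENNReal.coe_mul]
    rfl
  have hmeas : Measurable (fun q : ℝ × ℝ => Real.toNNReal (gaussianPDFReal 0 1 q.1)
      * Real.toNNReal (gaussianPDFReal 0 1 q.2)) :=
    Measurable.mul (((measurable_gaussianPDFReal 0 1).comp measurable_fst).real_toNNReal)
      (((measurable_gaussianPDFReal 0 1).comp measurable_snd).real_toNNReal)
  rw [hd, integral_withDensity_eq_integral_smul hmeas h]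
  refine integral_congr_ae (Filter.Eventually.of_forall fun q => ?_)
  show ((gaussianPDFReal 0 1 q.1).toNNReal * (gaussianPDFReal 0 1 q.2).toNNReal) • h q
    = gaussianPDFReal 0 1 q.1 * gaussianPDFReal 0 1 q.2 * h q
  rw [NNReal.smul_def, NNReal.coe_mul, Real.coe_toNNReal _ (gaussianPDFReal_nonneg 0 1 _),
    Real.coe_toNNReal _ (gaussianPDFReal_nonneg 0 1 _), smul_eq_mul]

lemma pdf2 (r φ : ℝ) :
    gaussianPDFReal 0 1 (r * Real.cos φ) * gaussianPDFReal 0 1 (r * Real.sin φ)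
      = (2 * π)⁻¹ * Real.exp (-(r ^ 2) / 2) := by
  have hpdf : ∀ y : ℝ, gaussianPDFReal 0 1 y = (Real.sqrt (2 * π))⁻¹ * Real.exp (-(y ^ 2) / 2) := by
    intro y
    simp [gaussianPDFReal_def]
  rw [hpdf, hpdf]
  have h1 : (Real.sqrt (2 * π))⁻¹ * (Real.sqrt (2 * π))⁻¹ = (2 * π)⁻¹ := by
    rw [← mul_inv, Real.mul_self_sqrt (by positivity)]
  have h2 : Real.exp (-((r * Real.cos φ) ^ 2) / 2) * Real.exp (-((r * Real.sin φ) ^ 2) / 2)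
      = Real.exp (-(r ^ 2) / 2) := by
    rw [← Real.exp_add]
    congr 1
    have := Real.sin_sq_add_cos_sq φ
    nlinarith [Real.sin_sq_add_cos_sq φ]
  calc (Real.sqrt (2*π))⁻¹ * Real.exp (-((r * Real.cos φ) ^ 2) / 2)
        * ((Real.sqrt (2*π))⁻¹ * Real.exp (-((r * Real.sin φ) ^ 2) / 2))
      = ((Real.sqrt (2*π))⁻¹ * (Real.sqrt (2*π))⁻¹)
        * (Real.exp (-((r * Real.cos φ) ^ 2) / 2) * Real.exp (-((r * Real.sin φ) ^ 2) / 2)) := by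
        ring
    _ = (2 * π)⁻¹ * Real.exp (-(r ^ 2) / 2) := by rw [h1, h2]

lemma radial1 : ∫ r in Ioi (0:ℝ), r * Real.exp (-(r ^ 2) / 2) = 1 := by
  have hderiv : ∀ x : ℝ, HasDerivAt (fun r : ℝ => -Real.exp (-(r ^ 2) / 2))
      (x * Real.exp (-(x ^ 2) / 2)) x := by
    intro x
    have h2 : HasDerivAt (fun r : ℝ => -(r ^ 2) / 2) (-x) x := by
      have := ((hasDerivAt_pow 2 x).neg).div_const 2
      simpa using this.congr_deriv (by ring)
    have h3 := (h2.exp).neg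
    exact h3.congr_deriv (by ring)
  have htend : Filter.Tendsto (fun r : ℝ => -Real.exp (-(r ^ 2) / 2)) Filter.atTop (nhds 0) := by
    rw [show (0:ℝ) = -0 by ring]
    refine Filter.Tendsto.neg ?_
    have h1 : Filter.Tendsto (fun r : ℝ => -(r ^ 2) / 2) Filter.atTop Filter.atBot := by
      apply Filter.Tendsto.atBot_div_const two_pos
      exact Filter.tendsto_neg_atTop_atBot.comp (Filter.tendsto_pow_atTop two_ne_zero)
    exact Real.tendsto_exp_atBot.comp h1
  have := integral_Ioi_of_hasDerivAt_of_nonneg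
    (g := fun r : ℝ => -Real.exp (-(r ^ 2) / 2))
    (g' := fun r : ℝ => r * Real.exp (-(r ^ 2) / 2)) (a := 0) (l := 0)
    ((Real.continuous_exp.comp (by fun_prop)).neg.continuousWithinAt)
    (fun x _ => hderiv x)
    (fun x hx => by
      have hx' : (0:ℝ) < x := hx
      positivity)
    htend
  rw [this]
  norm_num

lemma radial3 : ∫ r in Ioi (0:ℝ), r ^ 3 * Real.exp (-(r ^ 2) / 2) = 2 := by
  have hderiv : ∀ x : ℝ, HasDerivAt (fun r : ℝ => -(r ^ 2 + 2) * Real.exp (-(r ^ 2) / 2))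
      (x ^ 3 * Real.exp (-(x ^ 2) / 2)) x := by
    intro x
    have h1 : HasDerivAt (fun r : ℝ => -(r ^ 2 + 2)) (-(2 * x)) x := by
      have := ((hasDerivAt_pow 2 x).add_const 2).neg
      exact this.congr_deriv (by norm_num)
    have h2 : HasDerivAt (fun r : ℝ => -(r ^ 2) / 2) (-x) x := by
      have := ((hasDerivAt_pow 2 x).neg).div_const 2
      simpa using this.congr_deriv (by ring)
    have h3 := h1.mul h2.exp
    exact h3.congr_deriv (by ring)
  have htend : Filter.Tendsto (fun r : ℝ => -(r ^ 2 + 2) * Real.exp (-(r ^ 2) / 2))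
      Filter.atTop (nhds 0) := by
    have hsq : Filter.Tendsto (fun r : ℝ => r ^ 2 / 2) Filter.atTop Filter.atTop :=
      (Filter.tendsto_pow_atTop two_ne_zero).atTop_div_const two_pos
    have hh : Filter.Tendsto (fun x : ℝ => -(2 * x + 2) * Real.exp (-x)) Filter.atTop (nhds 0) := by
      have t1 : Filter.Tendsto (fun x : ℝ => x * Real.exp (-x)) Filter.atTop (nhds 0) := by
        simpa using Real.tendsto_pow_mul_exp_neg_atTop_nhds_zero 1
      have t2 : Filter.Tendsto (fun x : ℝ => Real.exp (-x)) Filter.atTop (nhds 0) :=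
        Real.tendsto_exp_neg_atTop_nhds_zero
      have := ((t1.const_mul 2).add (t2.const_mul 2)).neg
      simp only [mul_zero, add_zero, neg_zero, mul_add] at this ⊢
      convert this using 2 with x
      ring
    have := hh.comp hsq
    convert this using 2 with r
    simp only [Function.comp_apply]
    rw [show -(r ^ 2) / 2 = -(r ^ 2 / 2) by ring]
    ring
  have := integral_Ioi_of_hasDerivAt_of_nonneg
    (g := fun r : ℝ => -(r ^ 2 + 2) * Real.exp (-(r ^ 2) / 2))
    (g' := fun r : ℝ => r ^ 3 * Real.exp (-(r ^ 2) / 2)) (a := 0) (l := 0)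
    ((by fun_prop : Continuous fun r : ℝ => -(r ^ 2 + 2) * Real.exp (-(r ^ 2) / 2)).continuousWithinAt)
    (fun x _ => hderiv x)
    (fun x hx => by
      have : (0:ℝ) < x := hx
      positivity)
    htend
  rw [this]
  norm_num [Real.exp_zero]

lemma cos_sets {θ φ : ℝ} (h0 : 0 ≤ θ) (hπ : θ ≤ π) (hφ : φ ∈ Ioo (-π) π) :
    (φ ∈ Ioo (θ - π/2) (π/2) → (0 < Real.cos φ ∧ 0 < Real.cos (φ - θ)))
    ∧ (φ ∉ Ioo (θ - π/2) (π/2) → (Real.cos φ ≤ 0 ∨ Real.cos (φ - θ) ≤ 0)) := by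
  obtain ⟨hl, hr⟩ := hφ
  have hπpos := Real.pi_pos
  constructor
  · rintro ⟨ha, hb⟩
    exact ⟨Real.cos_pos_of_mem_Ioo ⟨by linarith, hb⟩,
      Real.cos_pos_of_mem_Ioo ⟨by linarith, by linarith⟩⟩
  · intro h
    rw [mem_Ioo, not_and_or] at h
    push_neg at h
    rcases h with h | h
    · by_cases hc : Real.cos φ ≤ 0
      · exact Or.inl hc
      · push_neg at hc
        refine Or.inr ?_
        have hφhalf : -(π/2) < φ := by
          by_contra hcon
          push_neg at hcon
          have : Real.cos φ ≤ 0 := by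
            rw [← Real.cos_neg]
            exact Real.cos_nonpos_of_pi_div_two_le_of_le (by linarith) (by linarith)
          linarith
        rw [← Real.cos_neg, neg_sub]
        exact Real.cos_nonpos_of_pi_div_two_le_of_le (by linarith) (by linarith)
    · exact Or.inl (Real.cos_nonpos_of_pi_div_two_le_of_le h (by linarith))

lemma angular_relu {θ : ℝ} (h0 : 0 ≤ θ) (hπ : θ ≤ π) :
    ∫ φ in Ioo (-π) π, max 0 (Real.cos φ) * max 0 (Real.cos (φ - θ))
      = ((π - θ) * Real.cos θ + Real.sin θ) / 2 := by
  have hπpos := Real.pi_pos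
  have key : EqOn (fun φ => max 0 (Real.cos φ) * max 0 (Real.cos (φ - θ)))
      (fun φ => (Ioo (θ - π/2) (π/2)).indicator
        (fun φ => Real.cos φ * Real.cos (φ - θ)) φ) (Ioo (-π) π) := by
    intro φ hφ
    obtain ⟨hpos, hneg⟩ := cos_sets h0 hπ hφ
    by_cases hmem : φ ∈ Ioo (θ - π/2) (π/2)
    · obtain ⟨hc1, hc2⟩ := hpos hmem
      simp only [indicator_of_mem hmem]
      rw [max_eq_right hc1.le, max_eq_right hc2.le]
    · simp only [indicator_of_notMem hmem]
      rcases hneg hmem with h | h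
      · rw [max_eq_left h, zero_mul]
      · rw [max_eq_left h, mul_zero]
  rw [setIntegral_congr_fun measurableSet_Ioo key,
    setIntegral_indicator measurableSet_Ioo,
    inter_eq_self_of_subset_right (Ioo_subset_Ioo (by linarith) (by linarith)),
    ← integral_Ioc_eq_integral_Ioo,
    ← intervalIntegral.integral_of_le (by linarith : θ - π/2 ≤ π/2)]
  -- FTC
  set G : ℝ → ℝ := fun φ => Real.cos θ * φ / 2 + Real.sin (2*φ - θ) / 4 with hG
  have hderiv : ∀ x : ℝ, HasDerivAt G (Real.cos x * Real.cos (x - θ)) x := by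
    intro x
    have h1 : HasDerivAt (fun φ : ℝ => Real.cos θ * φ / 2) (Real.cos θ / 2) x := by
      have := ((hasDerivAt_id x).const_mul (Real.cos θ)).div_const 2
      simpa using this
    have h2 : HasDerivAt (fun φ : ℝ => 2*φ - θ) 2 x := by
      have := ((hasDerivAt_id x).const_mul 2).sub_const θ
      simpa using this
    have h3 : HasDerivAt (fun φ : ℝ => Real.sin (2*φ - θ)) (Real.cos (2*x - θ) * 2) x :=
      (Real.hasDerivAt_sin _).comp x h2
    have h4 := h1.add (h3.div_const 4)
    have hid : Real.cos θ / 2 + Real.cos (2*x - θ) * 2 / 4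
        = Real.cos x * Real.cos (x - θ) := by
      have e1 : Real.cos θ = Real.cos x * Real.cos (x - θ) + Real.sin x * Real.sin (x - θ) := by
        rw [← Real.cos_sub x (x - θ)]
        congr 1
        ring
      have e2 : Real.cos (2*x - θ)
          = Real.cos x * Real.cos (x - θ) - Real.sin x * Real.sin (x - θ) := by
        rw [show 2*x - θ = x + (x - θ) by ring, Real.cos_add]
      rw [e1, e2]
      ring
    rw [hG]
    exact hid ▸ h4
  rw [intervalIntegral.integral_eq_sub_of_hasDerivAt (fun x _ => hderiv x)
    ((Continuous.mul Real.continuous_cos (Real.continuous_cos.comp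
      (continuous_id.sub continuous_const))).intervalIntegrable _ _)]
  rw [hG]
  simp only []
  rw [show 2*(π/2) - θ = π - θ by ring, show 2*(θ - π/2) - θ = θ - π by ring,
    Real.sin_pi_sub, Real.sin_sub_pi]
  ring

lemma angular_ind {θ : ℝ} (h0 : 0 ≤ θ) (hπ : θ ≤ π) :
    ∫ φ in Ioo (-π) π, (if 0 < Real.cos φ then (1:ℝ) else 0)
      * (if 0 < Real.cos (φ - θ) then (1:ℝ) else 0) = π - θ := by
  have hπpos := Real.pi_pos
  have key : EqOn (fun φ => (if 0 < Real.cos φ then (1:ℝ) else 0)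
      * (if 0 < Real.cos (φ - θ) then (1:ℝ) else 0))
      (fun φ => (Ioo (θ - π/2) (π/2)).indicator (fun _ => (1:ℝ)) φ) (Ioo (-π) π) := by
    intro φ hφ
    obtain ⟨hpos, hneg⟩ := cos_sets h0 hπ hφ
    by_cases hmem : φ ∈ Ioo (θ - π/2) (π/2)
    · obtain ⟨hc1, hc2⟩ := hpos hmem
      simp only [indicator_of_mem hmem, if_pos hc1, if_pos hc2, one_mul]
    · simp only [indicator_of_notMem hmem]
      rcases hneg hmem with h | h
      · rw [if_neg (not_lt.2 h), zero_mul]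
      · rw [if_neg (not_lt.2 h), mul_zero]
  rw [setIntegral_congr_fun measurableSet_Ioo key,
    setIntegral_indicator measurableSet_Ioo,
    inter_eq_self_of_subset_right (Ioo_subset_Ioo (by linarith) (by linarith)),
    setIntegral_const]
  rw [measureReal_def, Real.volume_Ioo, smul_eq_mul, mul_one, ENNReal.toReal_ofReal (by linarith)]
  ring

lemma gauss2_relu {z : ℝ} (hz1 : -1 ≤ z) (hz2 : z ≤ 1) :
    ∫ q : ℝ × ℝ, (Real.sqrt 2 * max 0 q.1)
        * (Real.sqrt 2 * max 0 (z * q.1 + Real.sqrt (1 - z ^ 2) * q.2))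
        ∂((gaussianReal 0 1).prod (gaussianReal 0 1))
      = (Real.sqrt (1 - z ^ 2) + (π - Real.arccos z) * z) / π := by
  have hπpos := Real.pi_pos
  set θ := Real.arccos z with hθ
  have hθ0 : 0 ≤ θ := Real.arccos_nonneg z
  have hθπ : θ ≤ π := Real.arccos_le_pi z
  have hcos : Real.cos θ = z := Real.cos_arccos hz1 hz2
  have hsin : Real.sin θ = Real.sqrt (1 - z ^ 2) := Real.sin_arccos z
  rw [integral_gauss_prod]
  have hpolar := integral_comp_polarCoord_symm
    (fun q : ℝ × ℝ => (gaussianPDFReal 0 1 q.1 * gaussianPDFReal 0 1 q.2)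
      * ((Real.sqrt 2 * max 0 q.1)
        * (Real.sqrt 2 * max 0 (z * q.1 + Real.sqrt (1 - z ^ 2) * q.2))))
  rw [Measure.volume_eq_prod] at hpolar
  rw [← hpolar]
  have htwo : Real.sqrt 2 * Real.sqrt 2 = 2 := Real.mul_self_sqrt (by norm_num)
  have hEq : EqOn
      (fun p : ℝ × ℝ => p.1 • ((gaussianPDFReal 0 1 ((polarCoord.symm p).1)
          * gaussianPDFReal 0 1 ((polarCoord.symm p).2))
        * ((Real.sqrt 2 * max 0 ((polarCoord.symm p).1))
          * (Real.sqrt 2 * max 0 (z * ((polarCoord.symm p).1)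
            + Real.sqrt (1 - z ^ 2) * ((polarCoord.symm p).2))))))
      (fun p : ℝ × ℝ => (p.1 ^ 3 * Real.exp (-(p.1 ^ 2) / 2))
        * (π⁻¹ * (max 0 (Real.cos p.2) * max 0 (Real.cos (p.2 - θ)))))
      polarCoord.target := by
    rintro ⟨r, φ⟩ ⟨hr, hφ⟩
    have hr' : (0:ℝ) < r := hr
    simp only [polarCoord_symm_apply, smul_eq_mul]
    rw [pdf2 r φ]
    have hmax1 : max 0 (r * Real.cos φ) = r * max 0 (Real.cos φ) := by
      rw [mul_max_of_nonneg _ _ hr'.le, mul_zero]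
    have harg : z * (r * Real.cos φ) + Real.sqrt (1 - z ^ 2) * (r * Real.sin φ)
        = r * Real.cos (φ - θ) := by
      rw [Real.cos_sub, hcos, hsin]
      ring
    have hmax2 : max 0 (z * (r * Real.cos φ) + Real.sqrt (1 - z ^ 2) * (r * Real.sin φ))
        = r * max 0 (Real.cos (φ - θ)) := by
      rw [harg, mul_max_of_nonneg _ _ hr'.le, mul_zero]
    rw [hmax1, hmax2]
    have h2π : (2 * π)⁻¹ = 2⁻¹ * π⁻¹ := by rw [mul_inv]
    rw [h2π]
    linear_combination (r ^ 3 * 2⁻¹ * π⁻¹ * Real.exp (-(r ^ 2) / 2)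
      * max 0 (Real.cos φ) * max 0 (Real.cos (φ - θ))) * htwo
  rw [setIntegral_congr_fun (polarCoord.open_target.measurableSet) hEq]
  have hsplit : ∫ p : ℝ × ℝ in polarCoord.target,
      (p.1 ^ 3 * Real.exp (-(p.1 ^ 2) / 2))
        * (π⁻¹ * (max 0 (Real.cos p.2) * max 0 (Real.cos (p.2 - θ))))
        ∂((volume : Measure ℝ).prod (volume : Measure ℝ)) =
      (∫ r in Ioi (0:ℝ), r ^ 3 * Real.exp (-(r ^ 2) / 2))
        * ∫ φ in Ioo (-π) π, π⁻¹ * (max 0 (Real.cos φ) * max 0 (Real.cos (φ - θ))) := by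
    rw [polarCoord_target]
    exact setIntegral_prod_mul (fun r => r ^ 3 * Real.exp (-(r ^ 2) / 2))
      (fun φ => π⁻¹ * (max 0 (Real.cos φ) * max 0 (Real.cos (φ - θ)))) _ _
  rw [hsplit, radial3, integral_const_mul, angular_relu hθ0 hθπ, hcos, hsin]
  field_simp
  ring

lemma gauss2_ind {z : ℝ} (hz1 : -1 ≤ z) (hz2 : z ≤ 1) :
    ∫ q : ℝ × ℝ, (Real.sqrt 2 * if 0 < q.1 then (1:ℝ) else 0)
        * (Real.sqrt 2 * if 0 < z * q.1 + Real.sqrt (1 - z ^ 2) * q.2 then (1:ℝ) else 0)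
        ∂((gaussianReal 0 1).prod (gaussianReal 0 1))
      = (π - Real.arccos z) / π := by
  have hπpos := Real.pi_pos
  set θ := Real.arccos z with hθ
  have hθ0 : 0 ≤ θ := Real.arccos_nonneg z
  have hθπ : θ ≤ π := Real.arccos_le_pi z
  have hcos : Real.cos θ = z := Real.cos_arccos hz1 hz2
  have hsin : Real.sin θ = Real.sqrt (1 - z ^ 2) := Real.sin_arccos z
  rw [integral_gauss_prod]
  have hpolar := integral_comp_polarCoord_symm
    (fun q : ℝ × ℝ => (gaussianPDFReal 0 1 q.1 * gaussianPDFReal 0 1 q.2)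
      * ((Real.sqrt 2 * if 0 < q.1 then (1:ℝ) else 0)
        * (Real.sqrt 2 * if 0 < z * q.1 + Real.sqrt (1 - z ^ 2) * q.2 then (1:ℝ) else 0)))
  rw [Measure.volume_eq_prod] at hpolar
  rw [← hpolar]
  have htwo : Real.sqrt 2 * Real.sqrt 2 = 2 := Real.mul_self_sqrt (by norm_num)
  have hEq : EqOn
      (fun p : ℝ × ℝ => p.1 • ((gaussianPDFReal 0 1 ((polarCoord.symm p).1)
          * gaussianPDFReal 0 1 ((polarCoord.symm p).2))
        * ((Real.sqrt 2 * if 0 < (polarCoord.symm p).1 then (1:ℝ) else 0)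
          * (Real.sqrt 2 * if 0 < z * ((polarCoord.symm p).1)
            + Real.sqrt (1 - z ^ 2) * ((polarCoord.symm p).2) then (1:ℝ) else 0))))
      (fun p : ℝ × ℝ => (p.1 * Real.exp (-(p.1 ^ 2) / 2))
        * (π⁻¹ * ((if 0 < Real.cos p.2 then (1:ℝ) else 0)
          * (if 0 < Real.cos (p.2 - θ) then (1:ℝ) else 0))))
      polarCoord.target := by
    rintro ⟨r, φ⟩ ⟨hr, hφ⟩
    have hr' : (0:ℝ) < r := hr
    simp only [polarCoord_symm_apply, smul_eq_mul]
    rw [pdf2 r φ]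
    have hif1 : (if 0 < r * Real.cos φ then (1:ℝ) else 0)
        = (if 0 < Real.cos φ then (1:ℝ) else 0) := by
      congr 1
      simp [mul_pos_iff_of_pos_left, hr']
    have harg : z * (r * Real.cos φ) + Real.sqrt (1 - z ^ 2) * (r * Real.sin φ)
        = r * Real.cos (φ - θ) := by
      rw [Real.cos_sub, hcos, hsin]
      ring
    have hif2 : (if 0 < z * (r * Real.cos φ) + Real.sqrt (1 - z ^ 2) * (r * Real.sin φ)
        then (1:ℝ) else 0) = (if 0 < Real.cos (φ - θ) then (1:ℝ) else 0) := by
      rw [harg]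
      congr 1
      simp [mul_pos_iff_of_pos_left, hr']
    rw [hif1, hif2]
    have h2π : (2 * π)⁻¹ = 2⁻¹ * π⁻¹ := by rw [mul_inv]
    rw [h2π]
    linear_combination (r * 2⁻¹ * π⁻¹ * Real.exp (-(r ^ 2) / 2)
      * (if 0 < Real.cos φ then (1:ℝ) else 0)
      * (if 0 < Real.cos (φ - θ) then (1:ℝ) else 0)) * htwo
  rw [setIntegral_congr_fun (polarCoord.open_target.measurableSet) hEq]
  have hsplit : ∫ p : ℝ × ℝ in polarCoord.target,
      (p.1 * Real.exp (-(p.1 ^ 2) / 2))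
        * (π⁻¹ * ((if 0 < Real.cos p.2 then (1:ℝ) else 0)
          * (if 0 < Real.cos (p.2 - θ) then (1:ℝ) else 0)))
        ∂((volume : Measure ℝ).prod (volume : Measure ℝ)) =
      (∫ r in Ioi (0:ℝ), r * Real.exp (-(r ^ 2) / 2))
        * ∫ φ in Ioo (-π) π, π⁻¹ * ((if 0 < Real.cos φ then (1:ℝ) else 0)
          * (if 0 < Real.cos (φ - θ) then (1:ℝ) else 0)) := by
    rw [polarCoord_target]
    exact setIntegral_prod_mul (fun r : ℝ => r * Real.exp (-(r ^ 2) / 2))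
      (fun φ : ℝ => π⁻¹ * ((if 0 < Real.cos φ then (1:ℝ) else 0)
        * (if 0 < Real.cos (φ - θ) then (1:ℝ) else 0))) _ _
  rw [hsplit, radial1, integral_const_mul, angular_ind hθ0 hθπ]
  field_simp

/-- Arc-cosine kernel identities: for unit vectors `X₁, X₂` with
`z = X₁ᵀX₂` and `w ∼ N(0, I_d)`,
`E[√2 max(0,wᵀX₁) · √2 max(0,wᵀX₂)] = (√(1-z²) + (π - arccos z) z)/π` and
`E[√2·1{wᵀX₁>0} · √2·1{wᵀX₂>0}] = (π - arccos z)/π`. -/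
theorem gaussian_relu_arccos_kernel (d : ℕ) (X1 X2 : Fin d → ℝ)
    (h1 : vnorm X1 = 1) (h2 : vnorm X2 = 1) :
    (∫ w, (Real.sqrt 2 * max 0 (∑ j, w j * X1 j)) *
        (Real.sqrt 2 * max 0 (∑ j, w j * X2 j)) ∂stdGauss d) =
      (Real.sqrt (1 - vdot X1 X2 ^ 2) +
        (π - Real.arccos (vdot X1 X2)) * vdot X1 X2) / π ∧
    (∫ w, (Real.sqrt 2 * if 0 < ∑ j, w j * X1 j then (1 : ℝ) else 0) *
        (Real.sqrt 2 * if 0 < ∑ j, w j * X2 j then (1 : ℝ) else 0) ∂stdGauss d) =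
      (π - Real.arccos (vdot X1 X2)) / π := by
  have h1' : ∑ j, X1 j ^ 2 = 1 := by
    have hnn : 0 ≤ ∑ j, X1 j ^ 2 := Finset.sum_nonneg fun j _ => sq_nonneg _
    have := h1
    rw [vnorm] at this
    nlinarith [Real.sq_sqrt hnn, this]
  have h2' : ∑ j, X2 j ^ 2 = 1 := by
    have hnn : 0 ≤ ∑ j, X2 j ^ 2 := Finset.sum_nonneg fun j _ => sq_nonneg _
    have := h2
    rw [vnorm] at this
    nlinarith [Real.sq_sqrt hnn, this]
  set z : ℝ := vdot X1 X2 with hzdef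
  have hzsum : z = ∑ j, X1 j * X2 j := rfl
  have hz2 : z ^ 2 ≤ 1 := by
    have := Finset.sum_mul_sq_le_sq_mul_sq Finset.univ X1 X2
    rw [h1', h2'] at this
    rw [hzsum]
    simpa using this
  have hzl : -1 ≤ z := by nlinarith
  have hzr : z ≤ 1 := by nlinarith
  have hlaw := stdGauss_map_proj X1 X2 h1' h2'
  rw [← hzsum] at hlaw
  have hpairmeas : Measurable (fun w : Fin d → ℝ => (∑ j, w j * X1 j, ∑ j, w j * X2 j)) := by
    fun_prop
  have hgmeas : Measurable (fun p : ℝ × ℝ =>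
      (p.1, z * p.1 + Real.sqrt (1 - z ^ 2) * p.2)) := by fun_prop
  constructor
  · have hf1c : Continuous (fun p : ℝ × ℝ => (Real.sqrt 2 * max 0 p.1)
        * (Real.sqrt 2 * max 0 p.2)) := by fun_prop
    calc ∫ w, (Real.sqrt 2 * max 0 (∑ j, w j * X1 j)) *
            (Real.sqrt 2 * max 0 (∑ j, w j * X2 j)) ∂stdGauss d
        = ∫ p : ℝ × ℝ, (Real.sqrt 2 * max 0 p.1) * (Real.sqrt 2 * max 0 p.2)
            ∂((stdGauss d).map (fun w => (∑ j, w j * X1 j, ∑ j, w j * X2 j))) :=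
          (integral_map hpairmeas.aemeasurable hf1c.aestronglyMeasurable).symm
      _ = ∫ p : ℝ × ℝ, (Real.sqrt 2 * max 0 p.1) * (Real.sqrt 2 * max 0 p.2)
            ∂(((gaussianReal 0 1).prod (gaussianReal 0 1)).map
              (fun p => (p.1, z * p.1 + Real.sqrt (1 - z ^ 2) * p.2))) := by rw [hlaw]
      _ = ∫ q : ℝ × ℝ, (Real.sqrt 2 * max 0 q.1)
            * (Real.sqrt 2 * max 0 (z * q.1 + Real.sqrt (1 - z ^ 2) * q.2))
            ∂((gaussianReal 0 1).prod (gaussianReal 0 1)) :=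
          integral_map hgmeas.aemeasurable hf1c.aestronglyMeasurable
      _ = (Real.sqrt (1 - z ^ 2) + (π - Real.arccos z) * z) / π := gauss2_relu hzl hzr
  · have hf2m : Measurable (fun p : ℝ × ℝ => (Real.sqrt 2 * if 0 < p.1 then (1:ℝ) else 0)
        * (Real.sqrt 2 * if 0 < p.2 then (1:ℝ) else 0)) := by
      refine Measurable.mul ?_ ?_
      · exact (measurable_const.mul (Measurable.ite
          (measurableSet_lt measurable_const measurable_fst) measurable_const measurable_const))
      · exact (measurable_const.mul (Measurable.ite
          (measurableSet_lt measurable_const measurable_snd) measurable_const measurable_const))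
    calc ∫ w, (Real.sqrt 2 * if 0 < ∑ j, w j * X1 j then (1:ℝ) else 0) *
            (Real.sqrt 2 * if 0 < ∑ j, w j * X2 j then (1:ℝ) else 0) ∂stdGauss d
        = ∫ p : ℝ × ℝ, (Real.sqrt 2 * if 0 < p.1 then (1:ℝ) else 0)
            * (Real.sqrt 2 * if 0 < p.2 then (1:ℝ) else 0)
            ∂((stdGauss d).map (fun w => (∑ j, w j * X1 j, ∑ j, w j * X2 j))) :=
          (integral_map hpairmeas.aemeasurable hf2m.aestronglyMeasurable).symm
      _ = ∫ p : ℝ × ℝ, (Real.sqrt 2 * if 0 < p.1 then (1:ℝ) else 0)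
            * (Real.sqrt 2 * if 0 < p.2 then (1:ℝ) else 0)
            ∂(((gaussianReal 0 1).prod (gaussianReal 0 1)).map
              (fun p => (p.1, z * p.1 + Real.sqrt (1 - z ^ 2) * p.2))) := by rw [hlaw]
      _ = ∫ q : ℝ × ℝ, (Real.sqrt 2 * if 0 < q.1 then (1:ℝ) else 0)
            * (Real.sqrt 2 * if 0 < z * q.1 + Real.sqrt (1 - z ^ 2) * q.2 then (1:ℝ) else 0)
            ∂((gaussianReal 0 1).prod (gaussianReal 0 1)) :=
          integral_map hgmeas.aemeasurable hf2m.aestronglyMeasurable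
      _ = (π - Real.arccos z) / π := gauss2_ind hzl hzr

end
end

section
/- Define Γ : [−1, 1] → ℝ by Γ(z) = z + (√(1 − z²) − z·arccos(z))/π (equivalently Γ(z) = (√(1−z²) + (π − arccos z)·z)/π). Then for any initial value K_1 ∈ (0, 1), the sequence defined by K_{l+1} = Γ(K_l) satisfies K_l ∈ (0, 1) for all l, is nondecreasing, and converges to 1 as l → ∞. -/
open scoped Real

private lemma gamma_pos_incr {z : ℝ} (hz : z ∈ Set.Ioo (0:ℝ) 1) :
    0 < Real.sqrt (1 - z ^ 2) - z * Real.arccos z := by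
  obtain ⟨h0, h1⟩ := hz
  have hθ0 : 0 < Real.arccos z := Real.arccos_pos.2 h1
  have hθ2 : Real.arccos z < π / 2 := Real.arccos_lt_pi_div_two.2 h0
  have htan := Real.lt_tan hθ0 hθ2
  have hcos : Real.cos (Real.arccos z) = z := Real.cos_arccos (by linarith) h1.le
  have hsin : Real.sin (Real.arccos z) = Real.sqrt (1 - z ^ 2) := Real.sin_arccos z
  rw [Real.tan_eq_sin_div_cos, hcos, hsin, lt_div_iff₀ h0] at htan
  nlinarith

private lemma gamma_lt_one {z : ℝ} (hz : z ∈ Set.Ioo (0:ℝ) 1) :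
    Real.sqrt (1 - z ^ 2) - z * Real.arccos z < π * (1 - z) := by
  obtain ⟨h0, h1⟩ := hz
  have hθ0 : 0 < Real.arccos z := Real.arccos_pos.2 h1
  have hθ2 : Real.arccos z < π / 2 := Real.arccos_lt_pi_div_two.2 h0
  have hsinlt : Real.sin (Real.arccos z) < Real.arccos z := Real.sin_lt hθ0
  rw [Real.sin_arccos] at hsinlt
  have hpi : (0:ℝ) < π := Real.pi_pos
  nlinarith

/-- For the arc-cosine iteration map
`Γ(z) = z + (√(1-z²) − z·arccos z)/π`, any sequence with `K_0 ∈ (0,1)` and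
`K_{l+1} = Γ(K_l)` stays in `(0,1)`, is nondecreasing, and converges to `1`. -/
theorem arccos_kernel_iteration_tendsto_one (K : ℕ → ℝ)
    (h0 : K 0 ∈ Set.Ioo (0 : ℝ) 1)
    (hrec : ∀ l : ℕ, K (l + 1) =
      K l + (Real.sqrt (1 - K l ^ 2) - K l * Real.arccos (K l)) / π) :
    (∀ l, K l ∈ Set.Ioo (0 : ℝ) 1) ∧ Monotone K ∧
      Filter.Tendsto K Filter.atTop (nhds 1) := by
  have hpi : (0:ℝ) < π := Real.pi_pos
  have hmem : ∀ l, K l ∈ Set.Ioo (0:ℝ) 1 := by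
    intro l
    induction l with
    | zero => exact h0
    | succ n ih =>
      have hp := gamma_pos_incr ih
      have hl := gamma_lt_one ih
      rw [hrec n]
      constructor
      · have : 0 < (Real.sqrt (1 - K n ^ 2) - K n * Real.arccos (K n)) / π :=
          div_pos hp hpi
        linarith [ih.1]
      · have hdiv : (Real.sqrt (1 - K n ^ 2) - K n * Real.arccos (K n)) / π
            < 1 - K n := by
          rw [div_lt_iff₀ hpi]; nlinarith [ih.2]
        linarith
  have hmono : Monotone K := by
    apply monotone_nat_of_le_succ
    intro n
    have hp := gamma_pos_incr (hmem n)
    rw [hrec n]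
    have : 0 < (Real.sqrt (1 - K n ^ 2) - K n * Real.arccos (K n)) / π :=
      div_pos hp hpi
    linarith
  refine ⟨hmem, hmono, ?_⟩
  have hbdd : BddAbove (Set.range K) := ⟨1, by rintro _ ⟨l, rfl⟩; exact (hmem l).2.le⟩
  set L := ⨆ l, K l with hL
  have htend : Filter.Tendsto K Filter.atTop (nhds L) :=
    tendsto_atTop_ciSup hmono hbdd
  have hKL : ∀ l, K l ≤ L := fun l => le_ciSup hbdd l
  have hL1 : L ≤ 1 := ciSup_le fun l => (hmem l).2.le
  have hL0 : 0 < L := lt_of_lt_of_le (hmem 0).1 (hKL 0)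
  -- fixed point argument
  have hcont : Continuous (fun z : ℝ =>
      z + (Real.sqrt (1 - z ^ 2) - z * Real.arccos z) / π) :=
    continuous_id.add ((((Real.continuous_sqrt.comp (by continuity)).sub
      (continuous_id.mul Real.continuous_arccos)).div_const π))
  have htend2 : Filter.Tendsto (fun l => K (l + 1)) Filter.atTop (nhds
      (L + (Real.sqrt (1 - L ^ 2) - L * Real.arccos L) / π)) := by
    have := (hcont.tendsto L).comp htend
    simpa [Function.comp_def, hrec] using this
  have htend3 : Filter.Tendsto (fun l => K (l + 1)) Filter.atTop (nhds L) :=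
    htend.comp (Filter.tendsto_add_atTop_nat 1)
  have hfix : L + (Real.sqrt (1 - L ^ 2) - L * Real.arccos L) / π = L :=
    tendsto_nhds_unique htend2 htend3
  have hzero : Real.sqrt (1 - L ^ 2) - L * Real.arccos L = 0 := by
    field_simp at hfix
    linarith
  have hLeq : L = 1 := by
    by_contra h
    have : L ∈ Set.Ioo (0:ℝ) 1 := ⟨hL0, lt_of_le_of_ne hL1 h⟩
    have := gamma_pos_incr this
    linarith
  rwa [hLeq] at htend
end
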